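/- Let x_1,...,x_{d+1}, y_1,...,y_d be 2d+1 distinct elements of a field K, A the (d+1)×d Cauchy matrix with A_{i,j} = 1/(x_i - y_j), and c = (c_1,...,c_{d+1}) a non-zero vector in the left kernel of A. Then the matrix γ with γ_{i,j} = c_i/(x_i - y_j) satisfies: (1) the rows of γ sum to the zero vector, and (2) every square submatrix of γ is invertible. -/

import Mathlib

open Polynomial Finset

lemma cauchy_det_ne_zero {K : Type*} [Field K] {n : ℕ} (x y : Fin n → K)
    (hx : Function.Injective x) (hy : Function.Injective y)
    (hxy : ∀ i j, x i ≠ y j) :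
    (Matrix.of fun i j => (x i - y j)⁻¹).det ≠ 0 := by
  classical
  intro hdet
  obtain ⟨v, hv, hmv⟩ := (Matrix.exists_mulVec_eq_zero_iff.mpr hdet)
  set P : K[X] := ∑ j, C (v j) * ∏ k ∈ univ.erase j, (X - C (y k)) with hP
  have hsub : ∀ i j, x i - y j ≠ 0 := fun i j => sub_ne_zero_of_ne (hxy i j)
  have hPdeg : P.natDegree < n ∨ P = 0 := by
    rcases eq_or_ne P 0 with h | h
    · exact Or.inr h
    · left
      have : P.natDegree ≤ n - 1 := by
        apply Polynomial.natDegree_sum_le_of_forall_le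
        intro j _
        refine le_trans (Polynomial.natDegree_mul_le) ?_
        simp only [Polynomial.natDegree_C, zero_add]
        refine le_trans (Polynomial.natDegree_prod_le _ _) ?_
        have : ∀ k ∈ univ.erase j, (X - C (y k)).natDegree = 1 := by
          intro k _; exact Polynomial.natDegree_X_sub_C _
        rw [Finset.sum_congr rfl this]
        simp [Finset.card_erase_of_mem]
      have hn : 1 ≤ n := by
        rcases Nat.eq_zero_or_pos n with h0 | h0
        · exfalso; apply hv; ext j; exact absurd j.2 (by omega)
        · exact h0
      omega
  have hPeval : ∀ i, P.eval (x i) = 0 := by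
    intro i
    have h0 : ∑ j, (x i - y j)⁻¹ * v j = 0 := by
      have := congrFun hmv i
      simpa [Matrix.mulVec, dotProduct] using this
    have : P.eval (x i) = (∑ j, (x i - y j)⁻¹ * v j) * ∏ k, (x i - y k) := by
      rw [Finset.sum_mul]
      simp only [hP, Polynomial.eval_finset_sum, Polynomial.eval_mul, Polynomial.eval_C,
        Polynomial.eval_prod, Polynomial.eval_sub, Polynomial.eval_X]
      apply Finset.sum_congr rfl
      intro j _
      rw [← Finset.mul_prod_erase univ _ (Finset.mem_univ j)]
      field_simp [hsub i j]
    rw [this, h0, zero_mul]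
  have hP0 : P = 0 := by
    rcases hPdeg with h | h
    · exact Polynomial.eq_zero_of_natDegree_lt_card_of_eval_eq_zero P hx hPeval
        (by simpa using h)
    · exact h
  apply hv
  ext j
  have := congrArg (Polynomial.eval (y j)) hP0
  simp only [hP, Polynomial.eval_finset_sum, Polynomial.eval_mul, Polynomial.eval_C,
    Polynomial.eval_prod, Polynomial.eval_sub, Polynomial.eval_X, Polynomial.eval_zero] at this
  rw [Finset.sum_eq_single j] at this
  · rcases mul_eq_zero.mp this with h | h
    · exact h
    · exfalso
      refine (Finset.prod_ne_zero_iff.mpr ?_) h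
      intro k hk
      exact sub_ne_zero_of_ne (fun e => (Finset.mem_erase.mp hk).1 (hy e.symm))
  · intro b _ hb
    rw [Finset.prod_eq_zero (Finset.mem_erase.mpr ⟨hb.symm, Finset.mem_univ j⟩)]
    · ring
    · simp
  · simp

/-- Let `A` be the `(d+1)×d` Cauchy matrix `A_{i,j} = (x_i - y_j)⁻¹` built from
`2d+1` pairwise distinct elements, and `c ≠ 0` a vector in the left kernel of
`A`. Then `γ_{i,j} = c_i (x_i - y_j)⁻¹` has rows summing to zero, and every
square submatrix of `γ` is invertible. -/
theorem stmt5 {K : Type*} [Field K] {d : ℕ} (hd : 1 ≤ d)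
    (x : Fin (d + 1) → K) (y : Fin d → K)
    (hdist : Function.Injective (Sum.elim x y))
    (c : Fin (d + 1) → K) (hc : c ≠ 0)
    (hker : Matrix.vecMul c (Matrix.of fun i j => (x i - y j)⁻¹) = 0) :
    (∀ j, ∑ i, (c i * (x i - y j)⁻¹) = 0) ∧
    (∀ (s : ℕ) (r : Fin s → Fin (d + 1)) (co : Fin s → Fin d),
      Function.Injective r → Function.Injective co →
      ((Matrix.of fun i j => c i * (x i - y j)⁻¹).submatrix r co).det ≠ 0) := by
  classical
  have hx : Function.Injective x := fun a b h => by
    have := hdist (a₁ := Sum.inl a) (a₂ := Sum.inl b) (by simpa using h)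
    simpa using this
  have hy : Function.Injective y := fun a b h => by
    have := hdist (a₁ := Sum.inr a) (a₂ := Sum.inr b) (by simpa using h)
    simpa using this
  have hxy : ∀ i j, x i ≠ y j := fun i j h => by
    have := hdist (a₁ := Sum.inl i) (a₂ := Sum.inr j) (by simpa using h)
    simp at this
  have hrows : ∀ j, ∑ i, (c i * (x i - y j)⁻¹) = 0 := by
    intro j
    have := congrFun hker j
    simpa [Matrix.vecMul, dotProduct] using this
  refine ⟨hrows, ?_⟩
  -- first: every c i ≠ 0
  have hcne : ∀ i, c i ≠ 0 := by
    intro i0 hc0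
    apply hc
    have hBdet : (Matrix.of fun (j : Fin d) (k : Fin d) =>
        (x (i0.succAbove j) - y k)⁻¹).det ≠ 0 :=
      cauchy_det_ne_zero _ _ (hx.comp (Fin.succAbove_right_injective)) hy
        (fun i j => hxy _ _)
    have hker' : Matrix.vecMul (fun j => c (i0.succAbove j))
        (Matrix.of fun (j : Fin d) (k : Fin d) => (x (i0.succAbove j) - y k)⁻¹) = 0 := by
      ext k
      have := hrows k
      rw [Fin.sum_univ_succAbove _ i0, hc0, zero_mul, zero_add] at this
      simpa [Matrix.vecMul, dotProduct] using this
    have hzero : (fun j => c (i0.succAbove j)) = 0 := by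
      by_contra hne
      exact hBdet (Matrix.exists_vecMul_eq_zero_iff.mp ⟨_, hne, hker'⟩)
    ext i
    rcases eq_or_ne i i0 with rfl | h
    · exact hc0
    · obtain ⟨j, hj⟩ := Fin.exists_succAbove_eq h
      rw [← hj]
      exact congrFun hzero j
  intro s r co hr hco
  have hCd : (Matrix.of fun (i : Fin s) (j : Fin s) =>
      (x (r i) - y (co j))⁻¹).det ≠ 0 :=
    cauchy_det_ne_zero _ _ (hx.comp hr) (hy.comp hco) (fun i j => hxy _ _)
  have : ((Matrix.of fun i j => c i * (x i - y j)⁻¹).submatrix r co) =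
      Matrix.of (fun i j => c (r i) * (Matrix.of fun (i : Fin s) (j : Fin s) =>
        (x (r i) - y (co j))⁻¹) i j) := by
    ext i j; simp [Matrix.submatrix]
  rw [this, Matrix.det_mul_column]
  exact mul_ne_zero (Finset.prod_ne_zero_iff.mpr fun i _ => hcne (r i)) hCd
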